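/- arXiv:2108.11045 — 5 statements merged into one kernel-verified Lean document; each statement's English description precedes it below -/
import Mathlib

section
/- Let n, m ∈ ℕ, let R ∈ ℝ^{n×m} be a fixed matrix, let L_G > 0, and let G : ℝⁿ → ℝ^{n×m} be L_G-Lipschitz with respect to the operator (spectral) norm on matrices, with G(y) = R·H(y) for all y ∈ ℝⁿ for some H : ℝⁿ → ℝ^{m×m} such that H(0) is invertible and G(0) ≠ 0. Let σ denote the smallest nonzero singular value of G(0). Then for every x ∈ ℝⁿ with L_G·‖x‖ < σ, the column space of G(x) equals the column space of G(0). -/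
open Matrix Set

noncomputable def matOpNorm {n m : ℕ} (M : Matrix (Fin n) (Fin m) ℝ) : ℝ :=
  ‖LinearMap.toContinuousLinearMap (Matrix.toEuclideanLin M)‖

noncomputable def minSV {n m : ℕ} (M : Matrix (Fin n) (Fin m) ℝ) : ℝ :=
  Real.sqrt (sInf {μ : ℝ | μ ≠ 0 ∧
    ∃ i, (Matrix.isHermitian_conjTranspose_mul_self M).eigenvalues i = μ})

lemma toEuc_mul {n m k : ℕ} (A : Matrix (Fin n) (Fin m) ℝ) (B : Matrix (Fin m) (Fin k) ℝ) :
    Matrix.toEuclideanLin (A * B) = (Matrix.toEuclideanLin A).comp (Matrix.toEuclideanLin B) := by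
  ext v
  simp [Matrix.toEuclideanLin_apply, Matrix.mulVec_mulVec]

lemma minSV_spec {n m : ℕ} (M : Matrix (Fin n) (Fin m) ℝ) (hM : M ≠ 0) :
    0 < minSV M ∧ ∀ u ∈ LinearMap.range (Matrix.toEuclideanLin M),
      ∃ v, Matrix.toEuclideanLin M v = u ∧ minSV M * ‖v‖ ≤ ‖u‖ := by
  set hH := Matrix.isHermitian_conjTranspose_mul_self M with hhH
  set e := hH.eigenvectorBasis with he
  set μ := hH.eigenvalues with hμ
  set S := {μ' : ℝ | μ' ≠ 0 ∧ ∃ i, μ i = μ'} with hS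
  have hadj : ∀ v w : EuclideanSpace ℝ (Fin m),
      inner ℝ (Matrix.toEuclideanLin M v) (Matrix.toEuclideanLin M w) =
        (inner ℝ v (Matrix.toEuclideanLin (Mᴴ * M) w) : ℝ) := by
    intro v w
    rw [toEuc_mul, Matrix.toEuclideanLin_conjTranspose_eq_adjoint]
    simp [LinearMap.adjoint_inner_right]
  have hEig : ∀ i, Matrix.toEuclideanLin (Mᴴ * M) (e i) = μ i • e i := by
    intro i
    have h := hH.mulVec_eigenvectorBasis i
    apply (WithLp.equiv 2 _).injective
    rw [Matrix.toEuclideanLin_apply]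
    exact h
  have hTe_zero : ∀ i, μ i = 0 → Matrix.toEuclideanLin M (e i) = 0 := by
    intro i hi
    rw [← inner_self_eq_zero (𝕜 := ℝ), hadj, hEig, hi]
    simp
  have hnonneg : ∀ i, 0 ≤ μ i := fun i =>
    (Matrix.posSemidef_conjTranspose_mul_self M).eigenvalues_nonneg i
  have hSfin : S.Finite := (Set.finite_range μ).subset (by rintro x ⟨-, i, rfl⟩; exact ⟨i, rfl⟩)
  have hSne : S.Nonempty := by
    by_contra hc
    rw [Set.not_nonempty_iff_eq_empty] at hc
    have hall : ∀ i, μ i = 0 := by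
      intro i
      by_contra hi
      have hmem : μ i ∈ S := ⟨hi, i, rfl⟩
      rw [hc] at hmem
      exact absurd hmem (Set.notMem_empty _)
    have hzero : Matrix.toEuclideanLin (Mᴴ * M) = Matrix.toEuclideanLin (0 : Matrix (Fin m) (Fin m) ℝ) := by
      apply e.toBasis.ext
      intro i
      rw [OrthonormalBasis.coe_toBasis, hEig i, hall i]
      simp
    have : Mᴴ * M = 0 := Matrix.toEuclideanLin.injective hzero
    exact hM (Matrix.conjTranspose_mul_self_eq_zero.mp this)
  have hSpos : ∀ s ∈ S, 0 < s := by
    rintro s ⟨hs, i, rfl⟩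
    exact lt_of_le_of_ne (hnonneg i) (Ne.symm hs)
  have hInf_mem : sInf S ∈ S := hSne.csInf_mem hSfin
  have hInfpos : 0 < sInf S := hSpos _ hInf_mem
  have hInf_le : ∀ i, μ i ≠ 0 → sInf S ≤ μ i := fun i hi =>
    csInf_le hSfin.bddBelow ⟨hi, i, rfl⟩
  have hσsq : minSV M ^ 2 = sInf S := Real.sq_sqrt hInfpos.le
  have hσpos : 0 < minSV M := Real.sqrt_pos.mpr hInfpos
  refine ⟨hσpos, ?_⟩
  rintro u ⟨w, rfl⟩
  set c : EuclideanSpace ℝ (Fin m) := WithLp.toLp 2 (fun i => if μ i = 0 then 0 else e.repr w i) with hc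
  set v : EuclideanSpace ℝ (Fin m) := e.repr.symm c with hv
  have hTv : Matrix.toEuclideanLin M v = Matrix.toEuclideanLin M w := by
    have key : Matrix.toEuclideanLin M (e.repr.symm (e.repr w - c)) = 0 := by
      rw [← e.sum_repr_symm, map_sum]
      apply Finset.sum_eq_zero
      intro i _
      rw [_root_.map_smul]
      by_cases h : μ i = 0
      · rw [hTe_zero i h, smul_zero]
      · have h0 : (e.repr w - c) i = 0 := by simp [hc, h]
        rw [h0, zero_smul]
    rw [map_sub, e.repr.symm_apply_apply, map_sub] at key
    exact (sub_eq_zero.mp key).symm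
  refine ⟨v, hTv, ?_⟩
  rw [← hTv]
  have hBv : Matrix.toEuclideanLin (Mᴴ * M) v =
      e.repr.symm (WithLp.toLp 2 (fun i => μ i * c i)) := by
    rw [hv, ← e.sum_repr_symm, ← e.sum_repr_symm, map_sum]
    congr 1
    funext i
    rw [_root_.map_smul, hEig i]
    rw [smul_smul, mul_comm]
  have hnormsq : ‖Matrix.toEuclideanLin M v‖ ^ 2 = ∑ i, μ i * c i ^ 2 := by
    rw [← real_inner_self_eq_norm_sq, hadj, hBv, hv,
      e.repr.symm.inner_map_map]
    simp [PiLp.inner_apply]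
    apply Finset.sum_congr rfl
    intro i _
    ring
  have hvnormsq : ‖v‖ ^ 2 = ∑ i, c i ^ 2 := by
    rw [hv, ← real_inner_self_eq_norm_sq, e.repr.symm.inner_map_map]
    simp only [PiLp.inner_apply, RCLike.inner_apply, conj_trivial]
    apply Finset.sum_congr rfl
    intro i _
    ring
  have hsq : (minSV M * ‖v‖) ^ 2 ≤ ‖Matrix.toEuclideanLin M v‖ ^ 2 := by
    rw [mul_pow, hσsq, hnormsq, hvnormsq, Finset.mul_sum]
    apply Finset.sum_le_sum
    intro i _
    by_cases h : μ i = 0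
    · have : c i = 0 := by simp [hc, h]
      simp [this]
    · have := hInf_le i h
      nlinarith [sq_nonneg (c i)]
  have h1 : 0 ≤ minSV M * ‖v‖ := mul_nonneg hσpos.le (norm_nonneg _)
  nlinarith [norm_nonneg (Matrix.toEuclideanLin M v)]
noncomputable def appMat {n m : ℕ} (M : Matrix (Fin n) (Fin m) ℝ)
    (v : EuclideanSpace ℝ (Fin m)) : EuclideanSpace ℝ (Fin n) :=
  Matrix.toEuclideanLin M v

noncomputable def colSpace {n m : ℕ} (M : Matrix (Fin n) (Fin m) ℝ) :
    Submodule ℝ (EuclideanSpace ℝ (Fin n)) :=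
  LinearMap.range (Matrix.toEuclideanLin M)

/-- **Lemma 1.** If `G` is `L_G`-Lipschitz in the operator norm,
`G y = R * H y` with `H 0` invertible and `G 0 ≠ 0`, then for every `x` with
`L_G * ‖x‖ <` (smallest nonzero singular value of `G 0`), the column space of
`G x` equals the column space of `G 0`. -/
theorem lemma1_image_equality {n m : ℕ} (R : Matrix (Fin n) (Fin m) ℝ) (LG : ℝ)
    (hLG : 0 < LG)
    (G : EuclideanSpace ℝ (Fin n) → Matrix (Fin n) (Fin m) ℝ)
    (hLip : ∀ y z, matOpNorm (G y - G z) ≤ LG * ‖y - z‖)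
    (H : EuclideanSpace ℝ (Fin n) → Matrix (Fin m) (Fin m) ℝ)
    (hfac : ∀ y, G y = R * H y)
    (hH0 : IsUnit (H 0)) (hG0 : G 0 ≠ 0)
    (x : EuclideanSpace ℝ (Fin n)) (hx : LG * ‖x‖ < minSV (G 0)) :
    colSpace (G x) = colSpace (G 0) := by
  classical
  obtain ⟨U, hU⟩ := hH0
  have hHsurj : LinearMap.range (Matrix.toEuclideanLin (H 0)) = ⊤ := by
    rw [LinearMap.range_eq_top]
    intro y
    refine ⟨Matrix.toEuclideanLin (U.inv) y, ?_⟩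
    have h1 : (H 0) * U.inv = 1 := by rw [← hU]; exact U.mul_inv
    have := congrArg (fun L => L y) (toEuc_mul (H 0) U.inv).symm
    simp only at this
    rw [LinearMap.comp_apply] at this
    rw [this, h1]
    simp [Matrix.toEuclideanLin_apply]
  have hB : colSpace (G 0) = LinearMap.range (Matrix.toEuclideanLin R) := by
    rw [colSpace, hfac 0, toEuc_mul, LinearMap.range_comp, hHsurj, Submodule.map_top]
  have hsub : colSpace (G x) ≤ colSpace (G 0) := by
    rw [hB, colSpace, hfac x, toEuc_mul]
    exact LinearMap.range_comp_le_range _ _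
  by_contra hne
  have hsup := Submodule.sup_orthogonal_inf_of_hasOrthogonalProjection hsub
  have hbot : (colSpace (G x))ᗮ ⊓ colSpace (G 0) ≠ ⊥ := by
    intro h
    rw [h, sup_bot_eq] at hsup
    exact hne hsup
  obtain ⟨u, humem, hune⟩ := (Submodule.ne_bot_iff _).mp hbot
  have huo : u ∈ (colSpace (G x))ᗮ := humem.1
  have huB : u ∈ colSpace (G 0) := humem.2
  obtain ⟨hσpos, hpre⟩ := minSV_spec (G 0) hG0
  obtain ⟨v, hTv, hbound⟩ := hpre u huB
  have hv0 : v ≠ 0 := by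
    rintro rfl
    rw [map_zero] at hTv
    exact hune hTv.symm
  have hinner1 : (inner ℝ u (Matrix.toEuclideanLin (G 0) v) : ℝ) = ‖u‖ ^ 2 := by
    rw [hTv, real_inner_self_eq_norm_sq]
  have hinner2 : (inner ℝ u (Matrix.toEuclideanLin (G x) v) : ℝ) = 0 := by
    rw [real_inner_comm]
    exact huo _ ⟨v, rfl⟩
  have hop : matOpNorm (G 0 - G x) ≤ LG * ‖x‖ := by
    have := hLip 0 x
    rwa [zero_sub, norm_neg] at this
  have hkey : ‖u‖ ^ 2 ≤ ‖u‖ * (LG * ‖x‖ * ‖v‖) := by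
    have heq : (inner ℝ u (Matrix.toEuclideanLin (G 0 - G x) v) : ℝ) = ‖u‖ ^ 2 := by
      rw [map_sub, LinearMap.sub_apply, inner_sub_right, hinner1, hinner2, sub_zero]
    calc ‖u‖ ^ 2 = inner ℝ u (Matrix.toEuclideanLin (G 0 - G x) v) := heq.symm
      _ ≤ ‖u‖ * ‖Matrix.toEuclideanLin (G 0 - G x) v‖ := real_inner_le_norm _ _
      _ ≤ ‖u‖ * (matOpNorm (G 0 - G x) * ‖v‖) := by
          have hle : ‖Matrix.toEuclideanLin (G 0 - G x) v‖ ≤ matOpNorm (G 0 - G x) * ‖v‖ := by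
            simpa [matOpNorm] using
              (LinearMap.toContinuousLinearMap (Matrix.toEuclideanLin (G 0 - G x))).le_opNorm v
          exact mul_le_mul_of_nonneg_left hle (norm_nonneg _)
      _ ≤ ‖u‖ * (LG * ‖x‖ * ‖v‖) := by
          apply mul_le_mul_of_nonneg_left _ (norm_nonneg _)
          exact mul_le_mul_of_nonneg_right hop (norm_nonneg _)
  have hupos : 0 < ‖u‖ := norm_pos_iff.mpr hune
  have hvpos : 0 < ‖v‖ := norm_pos_iff.mpr hv0
  nlinarith [mul_lt_mul_of_pos_right hx hvpos, mul_le_mul_of_nonneg_left hbound hupos.le,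
    mul_lt_mul_of_pos_left (mul_lt_mul_of_pos_right hx hvpos) hupos]
end

section
/- Let Ĝ : ℝⁿ → ℝ^{n×m} be L_G-Lipschitz with respect to the operator (spectral) norm, with Ĝ(0) = G₀ = R·H₀ where H₀ ∈ ℝ^{m×m} is invertible and G₀ ≠ 0, and suppose Ĝ(y) = R·Ĥ(y) for all y ∈ ℝⁿ for some Ĥ : ℝⁿ → ℝ^{m×m}. Let σ be the smallest nonzero singular value of G₀. Then for every x ∈ ℝⁿ with L_G·‖x‖ < σ, the smallest nonzero singular value of Ĝ(x) is at least σ − L_G·‖x‖. -/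
open Matrix Set

section Helpers

open Finset
open scoped RealInnerProductSpace

variable {n m : ℕ} (M : Matrix (Fin n) (Fin m) ℝ)

lemma appMat_norm_le (v : EuclideanSpace ℝ (Fin m)) :
    ‖Matrix.toEuclideanLin M v‖ ≤ matOpNorm M * ‖v‖ := by
  simpa [matOpNorm] using (LinearMap.toContinuousLinearMap (Matrix.toEuclideanLin M)).le_opNorm v

lemma toEuclideanLin_mul' {n m k : ℕ} (A : Matrix (Fin n) (Fin k) ℝ) (B : Matrix (Fin k) (Fin m) ℝ)
    (v : EuclideanSpace ℝ (Fin m)) :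
    Matrix.toEuclideanLin (A * B) v = Matrix.toEuclideanLin A (Matrix.toEuclideanLin B v) := by
  simp [Matrix.toEuclideanLin_apply, Matrix.mulVec_mulVec]

lemma inner_tm (v w : EuclideanSpace ℝ (Fin m)) :
    ⟪Matrix.toEuclideanLin (Mᴴ * M) v, w⟫
      = ⟪Matrix.toEuclideanLin M v, Matrix.toEuclideanLin M w⟫ := by
  rw [toEuclideanLin_mul', Matrix.toEuclideanLin_conjTranspose_eq_adjoint,
    LinearMap.adjoint_inner_left]

lemma apply_evb (i : Fin m) :
    Matrix.toEuclideanLin (Mᴴ * M)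
        ((Matrix.isHermitian_conjTranspose_mul_self M).eigenvectorBasis i)
      = (Matrix.isHermitian_conjTranspose_mul_self M).eigenvalues i •
        (Matrix.isHermitian_conjTranspose_mul_self M).eigenvectorBasis i := by
  have h := (Matrix.isHermitian_conjTranspose_mul_self M).mulVec_eigenvectorBasis i
  ext j
  exact congrFun h j

lemma norm_sq_eq_sum (v : EuclideanSpace ℝ (Fin m)) :
    ‖Matrix.toEuclideanLin M v‖ ^ 2
      = ∑ i, (Matrix.isHermitian_conjTranspose_mul_self M).eigenvalues i *
          ⟪(Matrix.isHermitian_conjTranspose_mul_self M).eigenvectorBasis i, v⟫ ^ 2 := by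
  have h1 : ‖Matrix.toEuclideanLin M v‖ ^ 2 = ⟪Matrix.toEuclideanLin (Mᴴ * M) v, v⟫ := by
    rw [inner_tm, real_inner_self_eq_norm_sq]
  rw [h1, ← OrthonormalBasis.sum_inner_mul_inner
    ((Matrix.isHermitian_conjTranspose_mul_self M).eigenvectorBasis)]
  refine Finset.sum_congr rfl fun i _ => ?_
  have h2 : ⟪Matrix.toEuclideanLin (Mᴴ * M) v,
      (Matrix.isHermitian_conjTranspose_mul_self M).eigenvectorBasis i⟫
      = (Matrix.isHermitian_conjTranspose_mul_self M).eigenvalues i *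
        ⟪(Matrix.isHermitian_conjTranspose_mul_self M).eigenvectorBasis i, v⟫ := by
    rw [inner_tm, real_inner_comm,
      ← inner_tm M ((Matrix.isHermitian_conjTranspose_mul_self M).eigenvectorBasis i) v, apply_evb,
      real_inner_smul_left]
  rw [h2]
  ring_nf

lemma eig_norm (i : Fin m) :
    ‖Matrix.toEuclideanLin M ((Matrix.isHermitian_conjTranspose_mul_self M).eigenvectorBasis i)‖ ^ 2
      = (Matrix.isHermitian_conjTranspose_mul_self M).eigenvalues i := by
  rw [norm_sq_eq_sum]
  have horth := (Matrix.isHermitian_conjTranspose_mul_self M).eigenvectorBasis.orthonormal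
  rw [orthonormal_iff_ite] at horth
  have : ∀ j : Fin m, (Matrix.isHermitian_conjTranspose_mul_self M).eigenvalues j *
      ⟪(Matrix.isHermitian_conjTranspose_mul_self M).eigenvectorBasis j,
      (Matrix.isHermitian_conjTranspose_mul_self M).eigenvectorBasis i⟫ ^ 2
      = if j = i then (Matrix.isHermitian_conjTranspose_mul_self M).eigenvalues i else 0 := by
    intro j
    rw [horth]
    by_cases h : j = i <;> simp [h]
  rw [Finset.sum_congr rfl (fun j _ => this j), Finset.sum_ite_eq' Finset.univ i]
  simp

lemma evb_mem_ker (i : Fin m)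
    (h0 : (Matrix.isHermitian_conjTranspose_mul_self M).eigenvalues i = 0) :
    (Matrix.isHermitian_conjTranspose_mul_self M).eigenvectorBasis i
      ∈ LinearMap.ker (Matrix.toEuclideanLin M) := by
  rw [LinearMap.mem_ker, ← norm_eq_zero]
  have := eig_norm M i
  rw [h0, pow_eq_zero_iff (by norm_num)] at this
  exact this

lemma sv_set_finite :
    {μ : ℝ | μ ≠ 0 ∧
      ∃ i, (Matrix.isHermitian_conjTranspose_mul_self M).eigenvalues i = μ}.Finite :=
  (Set.finite_range (Matrix.isHermitian_conjTranspose_mul_self M).eigenvalues).subset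
    (fun μ hμ => hμ.2.imp (fun _ h => h))

lemma sv_set_nonneg {μ : ℝ} (hμ : μ ∈ {μ : ℝ | μ ≠ 0 ∧
      ∃ i, (Matrix.isHermitian_conjTranspose_mul_self M).eigenvalues i = μ}) :
    0 ≤ μ := by
  obtain ⟨-, i, rfl⟩ := hμ
  exact Matrix.eigenvalues_conjTranspose_mul_self_nonneg M i

lemma sv_set_nonempty (hM : ∃ v, Matrix.toEuclideanLin M v ≠ 0) :
    {μ : ℝ | μ ≠ 0 ∧
      ∃ i, (Matrix.isHermitian_conjTranspose_mul_self M).eigenvalues i = μ}.Nonempty := by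
  by_contra h
  rw [Set.not_nonempty_iff_eq_empty, Set.eq_empty_iff_forall_notMem] at h
  obtain ⟨v, hv⟩ := hM
  apply hv
  rw [← norm_eq_zero]
  have h2 : ‖Matrix.toEuclideanLin M v‖ ^ 2 = 0 := by
    rw [norm_sq_eq_sum]
    refine Finset.sum_eq_zero fun i _ => ?_
    have : (Matrix.isHermitian_conjTranspose_mul_self M).eigenvalues i = 0 := by
      by_contra h3
      exact h _ ⟨h3, i, rfl⟩
    rw [this, zero_mul]
  exact pow_eq_zero_iff (by norm_num) |>.mp h2

lemma ker_perp_bound (v : EuclideanSpace ℝ (Fin m))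
    (hv : v ∈ (LinearMap.ker (Matrix.toEuclideanLin M))ᗮ) :
    sInf {μ : ℝ | μ ≠ 0 ∧
        ∃ i, (Matrix.isHermitian_conjTranspose_mul_self M).eigenvalues i = μ} * ‖v‖ ^ 2
      ≤ ‖Matrix.toEuclideanLin M v‖ ^ 2 := by
  have hbdd : BddBelow {μ : ℝ | μ ≠ 0 ∧
      ∃ i, (Matrix.isHermitian_conjTranspose_mul_self M).eigenvalues i = μ} :=
    (sv_set_finite M).bddBelow
  have hnorm : ‖v‖ ^ 2
      = ∑ i, ⟪(Matrix.isHermitian_conjTranspose_mul_self M).eigenvectorBasis i, v⟫ ^ 2 := by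
    rw [← real_inner_self_eq_norm_sq,
      ← OrthonormalBasis.sum_inner_mul_inner
        ((Matrix.isHermitian_conjTranspose_mul_self M).eigenvectorBasis) v v]
    exact Finset.sum_congr rfl fun i _ => by rw [real_inner_comm v]; ring
  rw [norm_sq_eq_sum, hnorm, Finset.mul_sum]
  refine Finset.sum_le_sum fun i _ => ?_
  by_cases h0 : (Matrix.isHermitian_conjTranspose_mul_self M).eigenvalues i = 0
  · have : ⟪(Matrix.isHermitian_conjTranspose_mul_self M).eigenvectorBasis i, v⟫ = 0 :=
      hv _ (evb_mem_ker M i h0)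
    rw [this, h0]
    simp
  · exact mul_le_mul_of_nonneg_right (csInf_le hbdd ⟨h0, i, rfl⟩) (sq_nonneg _)

end Helpers

/-- If `Ĝ` is `L_G`-Lipschitz in the operator norm with
`Ĝ 0 = G₀ = R * H₀`, `H₀` invertible, `G₀ ≠ 0`, and `Ĝ y = R * Ĥ y` for all `y`,
then for every `x` with `L_G * ‖x‖ < σ` (σ the smallest nonzero singular value of
`G₀`), the smallest nonzero singular value of `Ĝ x` is at least `σ − L_G * ‖x‖`. -/
theorem minSV_lower_bound {n m : ℕ} (R : Matrix (Fin n) (Fin m) ℝ) (LG : ℝ)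
    (hLG : 0 < LG)
    (Gh : EuclideanSpace ℝ (Fin n) → Matrix (Fin n) (Fin m) ℝ)
    (hLip : ∀ y z, matOpNorm (Gh y - Gh z) ≤ LG * ‖y - z‖)
    (H₀ : Matrix (Fin m) (Fin m) ℝ) (hH₀ : IsUnit H₀)
    (G₀ : Matrix (Fin n) (Fin m) ℝ) (hG₀fac : G₀ = R * H₀)
    (hGh0 : Gh 0 = G₀) (hG₀ : G₀ ≠ 0)
    (Hh : EuclideanSpace ℝ (Fin n) → Matrix (Fin m) (Fin m) ℝ)
    (hfac : ∀ y, Gh y = R * Hh y)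
    (x : EuclideanSpace ℝ (Fin n)) (hx : LG * ‖x‖ < minSV G₀) :
    minSV G₀ - LG * ‖x‖ ≤ minSV (Gh x) := by
  classical
  open scoped RealInnerProductSpace in
  set A := Gh x with hAdef
  set fA := Matrix.toEuclideanLin A with hfA
  set fG := Matrix.toEuclideanLin G₀ with hfG
  set ε := LG * ‖x‖ with hεdef
  have hε0 : 0 ≤ ε := by positivity
  set σ := minSV G₀ with hσdef
  set SG := {μ : ℝ | μ ≠ 0 ∧
    ∃ i, (Matrix.isHermitian_conjTranspose_mul_self G₀).eigenvalues i = μ} with hSGdef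
  set SA := {μ : ℝ | μ ≠ 0 ∧
    ∃ i, (Matrix.isHermitian_conjTranspose_mul_self A).eigenvalues i = μ} with hSAdef
  have hσ_eq : σ = Real.sqrt (sInf SG) := rfl
  -- positivity of σ
  have hGne : ∃ v, fG v ≠ 0 := by
    by_contra h
    push_neg at h
    apply hG₀
    have : Matrix.toEuclideanLin G₀ = 0 := LinearMap.ext fun v => h v
    simpa using (Matrix.toEuclideanLin (𝕜 := ℝ) (m := Fin n) (n := Fin m)).map_eq_zero_iff.mp this
  have hSGne : SG.Nonempty := sv_set_nonempty G₀ hGne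
  have hsG_mem : sInf SG ∈ SG := hSGne.csInf_mem (sv_set_finite G₀)
  have hsG_pos : 0 < sInf SG := lt_of_le_of_ne (sv_set_nonneg G₀ hsG_mem) (Ne.symm hsG_mem.1)
  have hσsq : σ ^ 2 = sInf SG := Real.sq_sqrt hsG_pos.le
  have hσpos : 0 < σ := Real.sqrt_pos.mpr hsG_pos
  have hεσ : ε < σ := hx
  have hσε0 : 0 ≤ σ - ε := by linarith
  -- perturbation bound
  have hE : ∀ v : EuclideanSpace ℝ (Fin m), ‖fA v - fG v‖ ≤ ε * ‖v‖ := by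
    intro v
    have h1 : ‖Matrix.toEuclideanLin (A - G₀) v‖ ≤ matOpNorm (A - G₀) * ‖v‖ :=
      appMat_norm_le _ v
    have h2 : matOpNorm (A - G₀) ≤ ε := by
      have := hLip x 0
      rw [hGh0, sub_zero] at this
      exact this
    have h3 : Matrix.toEuclideanLin (A - G₀) v = fA v - fG v := by
      rw [map_sub]
      rfl
    rw [h3] at h1
    calc ‖fA v - fG v‖ ≤ matOpNorm (A - G₀) * ‖v‖ := h1
      _ ≤ ε * ‖v‖ := mul_le_mul_of_nonneg_right h2 (norm_nonneg v)
  set W := (LinearMap.ker fG)ᗮ with hWdef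
  -- lower bound for G₀ on W
  have hGW : ∀ v ∈ W, σ * ‖v‖ ≤ ‖fG v‖ := by
    intro v hv
    have h1 := ker_perp_bound G₀ v hv
    have h2 : (σ * ‖v‖) ^ 2 ≤ ‖fG v‖ ^ 2 := by
      rw [mul_pow, hσsq]
      exact h1
    have := Real.sqrt_le_sqrt h2
    rwa [Real.sqrt_sq (by positivity), Real.sqrt_sq (norm_nonneg _)] at this
  -- lower bound for A on W
  have hAW : ∀ v ∈ W, (σ - ε) * ‖v‖ ≤ ‖fA v‖ := by
    intro v hv
    have h1 := hGW v hv
    have h2 : ‖fG v‖ - ‖fA v‖ ≤ ‖fG v - fA v‖ := norm_sub_norm_le _ _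
    have h3 : ‖fG v - fA v‖ = ‖fA v - fG v‖ := norm_sub_rev _ _
    have h4 := hE v
    rw [sub_mul]
    linarith
  -- range inclusion
  have hrange : LinearMap.range fA ≤ LinearMap.range fG := by
    rintro _ ⟨v, rfl⟩
    refine ⟨Matrix.toEuclideanLin (↑hH₀.unit⁻¹ : Matrix (Fin m) (Fin m) ℝ)
      (Matrix.toEuclideanLin (Hh x) v), ?_⟩
    rw [hfA, hAdef, hfac x, hfG, hG₀fac, toEuclideanLin_mul', toEuclideanLin_mul',
      ← toEuclideanLin_mul' H₀ (↑hH₀.unit⁻¹ : Matrix (Fin m) (Fin m) ℝ)]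
    have hinv : H₀ * (↑hH₀.unit⁻¹ : Matrix (Fin m) (Fin m) ℝ) = 1 := hH₀.mul_val_inv
    simp only [hinv]
    congr 1
    simp [Matrix.toEuclideanLin_apply, Matrix.one_mulVec]
  -- dimension count
  set K := LinearMap.ker fA with hKdef
  have hKWbot : K ⊓ W = ⊥ := by
    rw [Submodule.eq_bot_iff]
    rintro v ⟨hvK, hvW⟩
    have h1 := hAW v hvW
    have h2 : fA v = 0 := hvK
    rw [h2, norm_zero] at h1
    have hpos : 0 < σ - ε := by linarith
    have h3 : (σ - ε) * ‖v‖ = 0 := le_antisymm h1 (mul_nonneg hpos.le (norm_nonneg v))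
    rcases mul_eq_zero.mp h3 with h | h
    · exact absurd h hpos.ne'
    · exact norm_eq_zero.mp h
  have hdim : Module.finrank ℝ (EuclideanSpace ℝ (Fin m)) = m := finrank_euclideanSpace_fin
  have h1 := LinearMap.finrank_range_add_finrank_ker fA
  rw [hdim, ← hKdef] at h1
  have h2 := Submodule.finrank_add_finrank_orthogonal (LinearMap.ker fG)
  rw [hdim, ← hWdef] at h2
  have h3 := LinearMap.finrank_range_add_finrank_ker fG
  rw [hdim] at h3
  have h4 : Module.finrank ℝ (LinearMap.range fA) ≤ Module.finrank ℝ (LinearMap.range fG) :=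
    Submodule.finrank_mono hrange
  have h5 := Submodule.finrank_sup_add_finrank_inf_eq K W
  rw [hKWbot, finrank_bot] at h5
  have h6 := Submodule.finrank_le (K ⊔ W)
  rw [hdim] at h6
  have hsup : K ⊔ W = ⊤ := by
    apply Submodule.eq_top_of_finrank_eq
    rw [hdim]
    omega
  -- bound for elements of SA
  have hSAb : ∀ μ ∈ SA, (σ - ε) ^ 2 ≤ μ := by
    rintro μ ⟨hμ0, i, rfl⟩
    set v := (Matrix.isHermitian_conjTranspose_mul_self A).eigenvectorBasis i with hvdef
    have hnv : ‖v‖ = 1 :=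
      (Matrix.isHermitian_conjTranspose_mul_self A).eigenvectorBasis.orthonormal.1 i
    have hvK : ∀ k ∈ K, ⟪v, k⟫ = 0 := by
      intro k hk
      have hk0 : fA k = 0 := hk
      have hcalc : (Matrix.isHermitian_conjTranspose_mul_self A).eigenvalues i * ⟪v, k⟫ = 0 := by
        rw [← real_inner_smul_left, ← apply_evb, inner_tm, ← hfA, hk0, inner_zero_right]
      exact (mul_eq_zero.mp hcalc).resolve_left hμ0
    have hvtop : v ∈ K ⊔ W := hsup ▸ Submodule.mem_top
    obtain ⟨k, hk, w, hw, hkw⟩ := Submodule.mem_sup.mp hvtop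
    have hvw : ⟪v, w⟫ = 1 := by
      have : ⟪v, v⟫ = 1 := by
        rw [real_inner_self_eq_norm_sq, hnv]; norm_num
      calc ⟪v, w⟫ = ⟪v, k⟫ + ⟪v, w⟫ := by rw [hvK k hk, zero_add]
        _ = ⟪v, k + w⟫ := (inner_add_right v k w).symm
        _ = 1 := by rw [hkw, this]
    have hw1 : 1 ≤ ‖w‖ := by
      have := real_inner_le_norm v w
      rw [hvw, hnv, one_mul] at this
      exact this
    have hAvw : fA v = fA w := by
      have : fA v = fA k + fA w := by rw [← map_add, hkw]
      rw [this, hk, zero_add]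
    have hlow : σ - ε ≤ ‖fA v‖ := by
      rw [hAvw]
      have h5 := hAW w hw
      have h6 : (σ - ε) * 1 ≤ (σ - ε) * ‖w‖ := mul_le_mul_of_nonneg_left hw1 hσε0
      linarith
    have heq : ‖fA v‖ ^ 2 = (Matrix.isHermitian_conjTranspose_mul_self A).eigenvalues i :=
      eig_norm A i
    calc (σ - ε) ^ 2 ≤ ‖fA v‖ ^ 2 := pow_le_pow_left₀ hσε0 hlow 2
      _ = _ := heq
  -- SA is nonempty
  have hSAne : SA.Nonempty := by
    apply sv_set_nonempty
    obtain ⟨v₀, hv₀⟩ := hGne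
    have hv₀top : v₀ ∈ LinearMap.ker fG ⊔ W := by
      rw [hWdef, Submodule.sup_orthogonal_of_hasOrthogonalProjection]
      exact Submodule.mem_top
    obtain ⟨p, hp, w, hw, hpw⟩ := Submodule.mem_sup.mp hv₀top
    have hfGw : fG v₀ = fG w := by
      have : fG v₀ = fG p + fG w := by rw [← map_add, hpw]
      rw [this, hp, zero_add]
    have hwne : w ≠ 0 := by
      intro h
      rw [h, map_zero] at hfGw
      exact hv₀ (hfGw)
    refine ⟨w, fun h => ?_⟩
    have h1 := hAW w hw
    rw [hfA] at h1
    rw [h, norm_zero] at h1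
    have hwpos : 0 < ‖w‖ := norm_pos_iff.mpr hwne
    have hpos : 0 < σ - ε := by linarith
    have := mul_pos hpos hwpos
    linarith
  -- conclusion
  have hfin : (σ - ε) ^ 2 ≤ sInf SA := le_csInf hSAne hSAb
  have hsq : Real.sqrt ((σ - ε) ^ 2) ≤ Real.sqrt (sInf SA) := Real.sqrt_le_sqrt hfin
  rw [Real.sqrt_sq hσε0] at hsq
  have hgoal : minSV A = Real.sqrt (sInf SA) := rfl
  rw [hgoal]
  exact hsq
end

section
/- Suppose x ∈ ℝⁿ satisfies (L_f + L_G)·‖x‖ < σ. Then for every vector v ∈ ℝⁿ with v − f₀ ∈ Im(R) and ‖v − f₀‖ ≤ σ − (L_f + L_G)·‖x‖, and every consistent pair (f̂, Ĝ), there exists u ∈ ℝᵐ with ‖u‖ ≤ 1 such that v = f̂(x) + Ĝ(x)·u. In particular, the set B(f₀; σ − (L_f + L_G)‖x‖) ∩ (f₀ + Im(G₀)) is contained in the guaranteed velocity set V^G_x. -/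
open Matrix Set

lemma toEL_mul {n m k : ℕ} (A : Matrix (Fin n) (Fin m) ℝ) (B : Matrix (Fin m) (Fin k) ℝ)
    (v : EuclideanSpace ℝ (Fin k)) :
    Matrix.toEuclideanLin (A * B) v = Matrix.toEuclideanLin A (Matrix.toEuclideanLin B v) := by
  simp [Matrix.toEuclideanLin_apply, Matrix.mulVec_mulVec]

lemma inner_TT {n m : ℕ} (G : Matrix (Fin n) (Fin m) ℝ) (u v : EuclideanSpace ℝ (Fin m)) :
    inner ℝ u (Matrix.toEuclideanLin (Gᴴ * G) v) =
      (inner ℝ (Matrix.toEuclideanLin G u) (Matrix.toEuclideanLin G v) : ℝ) := by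
  rw [toEL_mul, Matrix.toEuclideanLin_conjTranspose_eq_adjoint, LinearMap.adjoint_inner_right]

lemma toEL_eigen {n m : ℕ} (G : Matrix (Fin n) (Fin m) ℝ) (i : Fin m) :
    Matrix.toEuclideanLin (Gᴴ * G) ((Matrix.isHermitian_conjTranspose_mul_self G).eigenvectorBasis i)
      = (Matrix.isHermitian_conjTranspose_mul_self G).eigenvalues i •
        (Matrix.isHermitian_conjTranspose_mul_self G).eigenvectorBasis i := by
  have h := (Matrix.isHermitian_conjTranspose_mul_self G).mulVec_eigenvectorBasis i
  ext j
  simpa [Matrix.toEuclideanLin_apply] using congrFun h j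

lemma minSV_facts {n m : ℕ} (G : Matrix (Fin n) (Fin m) ℝ) (hG : G ≠ 0) :
    0 < minSV G ∧
    ∀ u : EuclideanSpace ℝ (Fin m),
      u ∈ (LinearMap.ker (Matrix.toEuclideanLin G))ᗮ →
      minSV G * ‖u‖ ≤ ‖Matrix.toEuclideanLin G u‖ := by
  classical
  set hM := Matrix.isHermitian_conjTranspose_mul_self G with hMdef
  set b := hM.eigenvectorBasis with hbdef
  set μ := hM.eigenvalues with hμdef
  set S : Set ℝ := {μ' : ℝ | μ' ≠ 0 ∧ ∃ i, μ i = μ'} with hSdef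
  have hnormsq : ∀ v : EuclideanSpace ℝ (Fin m),
      ‖Matrix.toEuclideanLin G v‖ ^ 2 = inner ℝ v (Matrix.toEuclideanLin (Gᴴ * G) v) := by
    intro v
    rw [inner_TT, real_inner_self_eq_norm_sq]
  have hker : ∀ i, μ i = 0 → b i ∈ LinearMap.ker (Matrix.toEuclideanLin G) := by
    intro i hi
    have h0 : ‖Matrix.toEuclideanLin G (b i)‖ ^ 2 = 0 := by
      rw [hnormsq, toEL_eigen, real_inner_smul_right]
      exact mul_eq_zero_of_left hi _
    have := pow_eq_zero_iff (n := 2) (by norm_num) |>.mp h0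
    simpa [LinearMap.mem_ker] using norm_eq_zero.mp this
  have hfin : S.Finite := (Set.finite_range μ).subset (fun a ha => ⟨ha.2.choose, ha.2.choose_spec⟩)
  have hne : S.Nonempty := by
    by_contra hemp
    push_neg at hemp
    have hall : ∀ i, μ i = 0 := by
      intro i
      by_contra hi
      have : μ i ∈ S := ⟨hi, i, rfl⟩
      rw [hemp] at this
      exact this
    have hT0 : ∀ v : EuclideanSpace ℝ (Fin m), Matrix.toEuclideanLin G v = 0 := by
      intro v
      have hv := b.sum_repr' v
      calc Matrix.toEuclideanLin G v
          = Matrix.toEuclideanLin G (∑ i, (inner ℝ (b i) v : ℝ) • b i) := by rw [hv]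
        _ = ∑ i, (inner ℝ (b i) v : ℝ) • Matrix.toEuclideanLin G (b i) := by
            rw [map_sum]
            exact Finset.sum_congr rfl fun i _ => _root_.map_smul _ _ _
        _ = 0 := by
            refine Finset.sum_eq_zero fun i _ => ?_
            have h := hker i (hall i)
            rw [LinearMap.mem_ker] at h
            rw [h, smul_zero]
    apply hG
    apply Matrix.toEuclideanLin.injective
    ext v
    simp [hT0]
  have hmem : sInf S ∈ S := hne.csInf_mem hfin
  have hpos : 0 < sInf S := by
    obtain ⟨hne0, i, hi⟩ := hmem
    have hnn := Matrix.eigenvalues_conjTranspose_mul_self_nonneg G i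
    rw [← hMdef, ← hμdef] at hnn
    have hne' : μ i ≠ 0 := fun h => hne0 (hi ▸ h)
    rw [← hi]
    exact hnn.lt_of_ne (Ne.symm hne')
  have hσ : minSV G = Real.sqrt (sInf S) := rfl
  have hσpos : 0 < minSV G := by rw [hσ]; exact Real.sqrt_pos.mpr hpos
  have hσ2 : minSV G ^ 2 = sInf S := by rw [hσ]; exact Real.sq_sqrt hpos.le
  refine ⟨hσpos, fun u hu => ?_⟩
  have hc : ∀ i, μ i = 0 → (inner ℝ (b i) u : ℝ) = 0 := by
    intro i hi
    exact (Submodule.mem_orthogonal _ u).mp hu (b i) (hker i hi)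
  have h1 : ‖Matrix.toEuclideanLin G u‖ ^ 2 = ∑ i, μ i * (inner ℝ (b i) u : ℝ) ^ 2 := by
    rw [hnormsq, ← b.sum_inner_mul_inner]
    refine Finset.sum_congr rfl fun i _ => ?_
    have : (inner ℝ (b i) (Matrix.toEuclideanLin (Gᴴ * G) u) : ℝ)
        = μ i * (inner ℝ (b i) u : ℝ) := by
      rw [inner_TT, real_inner_comm, ← inner_TT, toEL_eigen, real_inner_smul_right,
        real_inner_comm]
    rw [this, real_inner_comm u (b i)]
    ring
  have h2 : ‖u‖ ^ 2 = ∑ i, (inner ℝ (b i) u : ℝ) ^ 2 := by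
    rw [← real_inner_self_eq_norm_sq, ← b.sum_inner_mul_inner]
    refine Finset.sum_congr rfl fun i _ => ?_
    rw [real_inner_comm u (b i)]
    ring
  have h3 : minSV G ^ 2 * ‖u‖ ^ 2 ≤ ‖Matrix.toEuclideanLin G u‖ ^ 2 := by
    rw [h1, h2, Finset.mul_sum]
    refine Finset.sum_le_sum fun i _ => ?_
    by_cases hi : μ i = 0
    · rw [hc i hi]; simp
    · have hle : sInf S ≤ μ i := csInf_le hfin.bddBelow ⟨hi, i, rfl⟩
      rw [hσ2]
      exact mul_le_mul_of_nonneg_right hle (sq_nonneg _)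
  have hmn : (0:ℝ) ≤ minSV G * ‖u‖ := mul_nonneg hσpos.le (norm_nonneg _)
  have hsq : (minSV G * ‖u‖) ^ 2 ≤ ‖Matrix.toEuclideanLin G u‖ ^ 2 := by
    rw [mul_pow]; exact h3
  exact (pow_le_pow_iff_left₀ hmn (norm_nonneg _) (by norm_num)).mp hsq

/-- A pair `(fh, Gh)` consistent with the prior knowledge of the dynamics. -/
structure Consistent {n m : ℕ} (R : Matrix (Fin n) (Fin m) ℝ) (Lf LG : ℝ)
    (f₀ : EuclideanSpace ℝ (Fin n)) (G₀ : Matrix (Fin n) (Fin m) ℝ)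
    (fh : EuclideanSpace ℝ (Fin n) → EuclideanSpace ℝ (Fin n))
    (Gh : EuclideanSpace ℝ (Fin n) → Matrix (Fin n) (Fin m) ℝ) : Prop where
  lipf : ∀ y z, ‖fh y - fh z‖ ≤ Lf * ‖y - z‖
  lipG : ∀ y z, matOpNorm (Gh y - Gh z) ≤ LG * ‖y - z‖
  f_zero : fh 0 = f₀
  G_zero : Gh 0 = G₀
  f_im : ∀ y, fh y ∈ colSpace R
  factor : ∃ Hh : EuclideanSpace ℝ (Fin n) → Matrix (Fin m) (Fin m) ℝ,
    IsUnit (Hh 0) ∧ ∀ y, Gh y = R * Hh y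

/-- The guaranteed velocity set at `x`. -/
noncomputable def GVS {n m : ℕ} (R : Matrix (Fin n) (Fin m) ℝ) (Lf LG : ℝ)
    (f₀ : EuclideanSpace ℝ (Fin n)) (G₀ : Matrix (Fin n) (Fin m) ℝ)
    (x : EuclideanSpace ℝ (Fin n)) : Set (EuclideanSpace ℝ (Fin n)) :=
  ⋂ (fh : EuclideanSpace ℝ (Fin n) → EuclideanSpace ℝ (Fin n))
    (Gh : EuclideanSpace ℝ (Fin n) → Matrix (Fin n) (Fin m) ℝ)
    (_ : Consistent R Lf LG f₀ G₀ fh Gh),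
      {w | ∃ u : EuclideanSpace ℝ (Fin m), ‖u‖ ≤ 1 ∧ w = fh x + appMat (Gh x) u}

set_option maxHeartbeats 2000000 in
/-- **Theorem 1.** If `(L_f + L_G)‖x‖ < σ`, every `v` with
`v − f₀ ∈ Im G₀` and `‖v − f₀‖ ≤ σ − (L_f + L_G)‖x‖` is achieved by every
consistent pair with an admissible control; in particular the ball
`B(f₀; σ − (L_f + L_G)‖x‖) ∩ (f₀ + Im G₀)` is contained in the GVS at `x`. -/
theorem theorem1_ball_underapprox {n m : ℕ} (R : Matrix (Fin n) (Fin m) ℝ)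
    (Lf LG : ℝ) (hLf : 0 < Lf) (hLG : 0 < LG)
    (f₀ : EuclideanSpace ℝ (Fin n)) (hf₀ : f₀ ∈ colSpace R)
    (H₀ : Matrix (Fin m) (Fin m) ℝ) (hH₀ : IsUnit H₀)
    (G₀ : Matrix (Fin n) (Fin m) ℝ) (hG₀fac : G₀ = R * H₀) (hG₀ : G₀ ≠ 0)
    (x : EuclideanSpace ℝ (Fin n)) (hx : (Lf + LG) * ‖x‖ < minSV G₀) :
    (∀ v : EuclideanSpace ℝ (Fin n), v - f₀ ∈ colSpace G₀ →
      ‖v - f₀‖ ≤ minSV G₀ - (Lf + LG) * ‖x‖ →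
      ∀ fh Gh, Consistent R Lf LG f₀ G₀ fh Gh →
        ∃ u : EuclideanSpace ℝ (Fin m), ‖u‖ ≤ 1 ∧ v = fh x + appMat (Gh x) u) ∧
    Metric.closedBall f₀ (minSV G₀ - (Lf + LG) * ‖x‖) ∩
        {v | v - f₀ ∈ colSpace G₀} ⊆ GVS R Lf LG f₀ G₀ x := by
  obtain ⟨hσpos, hlow⟩ := minSV_facts G₀ hG₀
  set σ := minSV G₀ with hσdef
  set T₀ := Matrix.toEuclideanLin G₀ with hT0
  have hcol : colSpace G₀ = LinearMap.range T₀ := rfl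
  have hone : ∀ z : EuclideanSpace ℝ (Fin m),
      Matrix.toEuclideanLin (1 : Matrix (Fin m) (Fin m) ℝ) z = z := by
    intro z
    simp [Matrix.toEuclideanLin_apply, Matrix.one_mulVec]
  have hRle : colSpace R ≤ colSpace G₀ := by
    rintro w ⟨z, rfl⟩
    obtain ⟨Hu, hHu⟩ := hH₀
    refine ⟨Matrix.toEuclideanLin ((↑Hu⁻¹ : Matrix (Fin m) (Fin m) ℝ)) z, ?_⟩
    have hmul : H₀ * (↑Hu⁻¹ : Matrix (Fin m) (Fin m) ℝ) = 1 := by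
      rw [← hHu]; exact Hu.mul_inv
    calc Matrix.toEuclideanLin G₀ (Matrix.toEuclideanLin (↑Hu⁻¹ : Matrix (Fin m) (Fin m) ℝ) z)
        = Matrix.toEuclideanLin R (Matrix.toEuclideanLin (H₀ * ↑Hu⁻¹) z) := by
          rw [hG₀fac, toEL_mul, toEL_mul]
      _ = Matrix.toEuclideanLin R z := by rw [hmul, hone]
  have main : ∀ v : EuclideanSpace ℝ (Fin n), v - f₀ ∈ colSpace G₀ →
      ‖v - f₀‖ ≤ σ - (Lf + LG) * ‖x‖ →
      ∀ fh Gh, Consistent R Lf LG f₀ G₀ fh Gh →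
        ∃ u : EuclideanSpace ℝ (Fin m), ‖u‖ ≤ 1 ∧ v = fh x + appMat (Gh x) u := by
    intro v hvmem hvnorm fh Gh hc
    set T := Matrix.toEuclideanLin (Gh x) with hT
    set K := (LinearMap.ker T₀)ᗮ with hK
    set δ := LG * ‖x‖ with hδ
    have hxnn : (0:ℝ) ≤ ‖x‖ := norm_nonneg x
    have hδσ : δ < σ := by nlinarith [mul_nonneg hLf.le hxnn]
    have hpert : ∀ u : EuclideanSpace ℝ (Fin m), ‖T u - T₀ u‖ ≤ δ * ‖u‖ := by
      intro u
      have h1 : T u - T₀ u = Matrix.toEuclideanLin (Gh x - G₀) u := by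
        rw [map_sub]; rfl
      rw [h1]
      have h2 : ‖Matrix.toEuclideanLin (Gh x - G₀) u‖ ≤ matOpNorm (Gh x - G₀) * ‖u‖ := by
        have h := (LinearMap.toContinuousLinearMap
          (Matrix.toEuclideanLin (Gh x - G₀))).le_opNorm u
        simpa [matOpNorm] using h
      refine h2.trans (mul_le_mul_of_nonneg_right ?_ (norm_nonneg _))
      have h3 := hc.lipG x 0
      rw [hc.G_zero] at h3
      simpa using h3
    have hTlow : ∀ u ∈ K, (σ - δ) * ‖u‖ ≤ ‖T u‖ := by
      intro u hu
      have h1 := hlow u hu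
      have h2 := hpert u
      have h3 : ‖T₀ u‖ ≤ ‖T u‖ + ‖T u - T₀ u‖ := by
        calc ‖T₀ u‖ = ‖T u - (T u - T₀ u)‖ := by rw [sub_sub_cancel]
          _ ≤ ‖T u‖ + ‖T u - T₀ u‖ := norm_sub_le _ _
      nlinarith
    have hσδ : 0 < σ - δ := by linarith
    have hrange : ∀ z, T z ∈ LinearMap.range T₀ := by
      intro z
      obtain ⟨Hh, _, hHh⟩ := hc.factor
      have h : T z = Matrix.toEuclideanLin R (Matrix.toEuclideanLin (Hh x) z) := by
        rw [hT, hHh x, toEL_mul]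
      rw [h, ← hcol]
      exact hRle ⟨_, rfl⟩
    set T' : K →ₗ[ℝ] EuclideanSpace ℝ (Fin n) := T.comp K.subtype with hT'
    have hT'inj : Function.Injective T' := by
      rw [← LinearMap.ker_eq_bot, LinearMap.ker_eq_bot']
      intro c hc0
      have h1 := hTlow c c.2
      rw [show T (c : EuclideanSpace ℝ (Fin m)) = T' c from rfl, hc0, norm_zero] at h1
      have : ‖(c : EuclideanSpace ℝ (Fin m))‖ = 0 := le_antisymm (by nlinarith) (norm_nonneg _)
      exact Subtype.ext (norm_eq_zero.mp this)
    have hfr1 : Module.finrank ℝ (LinearMap.range T') = Module.finrank ℝ K :=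
      LinearMap.finrank_range_of_inj hT'inj
    have hfr2 := Submodule.finrank_add_finrank_orthogonal (K := LinearMap.ker T₀)
    have hfr3 := LinearMap.finrank_range_add_finrank_ker T₀
    have hle : LinearMap.range T' ≤ LinearMap.range T₀ := by
      rintro w ⟨z, rfl⟩
      exact hrange _
    have heq : LinearMap.range T' = LinearMap.range T₀ :=
      Submodule.eq_of_le_of_finrank_le hle (by rw [hfr1]; linarith [hfr2, hfr3])
    have hf₀mem : f₀ ∈ LinearMap.range T₀ := hcol ▸ hRle hf₀
    have hfhmem : fh x ∈ LinearMap.range T₀ := hcol ▸ hRle (hc.f_im x)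
    have hw : v - fh x ∈ LinearMap.range T₀ := by
      have h1 : v - f₀ ∈ LinearMap.range T₀ := hcol ▸ hvmem
      have h2 := Submodule.add_mem _ h1 (Submodule.sub_mem _ hf₀mem hfhmem)
      rwa [sub_add_sub_cancel] at h2
    rw [← heq] at hw
    obtain ⟨⟨u, huK⟩, huw⟩ := hw
    have hTu : T u = v - fh x := huw
    have hwnorm : ‖v - fh x‖ ≤ σ - δ := by
      have h1 : ‖f₀ - fh x‖ ≤ Lf * ‖x‖ := by
        have h := hc.lipf 0 x
        rw [hc.f_zero] at h
        simpa using h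
      have h2 : ‖v - fh x‖ ≤ ‖v - f₀‖ + ‖f₀ - fh x‖ := by
        have h := norm_add_le (v - f₀) (f₀ - fh x)
        rwa [sub_add_sub_cancel] at h
      nlinarith
    refine ⟨u, ?_, ?_⟩
    · have h1 := hTlow u huK
      rw [hTu] at h1
      have h2 : (σ - δ) * ‖u‖ ≤ (σ - δ) * 1 := by rw [mul_one]; exact h1.trans hwnorm
      exact le_of_mul_le_mul_left h2 hσδ
    · rw [show appMat (Gh x) u = T u from rfl, hTu]
      abel
  refine ⟨main, ?_⟩
  rintro v ⟨hball, hset⟩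
  refine Set.mem_iInter.mpr fun fh => Set.mem_iInter.mpr fun Gh =>
    Set.mem_iInter.mpr fun hc => ?_
  have hb : ‖v - f₀‖ ≤ σ - (Lf + LG) * ‖x‖ := by
    simpa [Metric.mem_closedBall, dist_eq_norm] using hball
  exact main v hset hb fh Gh hc
end

section
/- Define g(s) = σ − (L_f + L_G)·s for s ∈ ℝ. Let T ≥ 0 and let φ : [0, T] → ℝⁿ be differentiable with φ(0) = 0, with (L_f + L_G)·‖φ(t)‖ ≤ σ for all t ∈ [0, T], and suppose there exists v : [0, T] → ℝⁿ with ‖v(t)‖ ≤ 1 and v(t) ∈ Im(G₀) for all t, such that φ′(t) = f₀ + g(‖φ(t)‖)·v(t) for every t ∈ [0, T]. Then for every consistent pair (f̂, Ĝ) there exists u : [0, T] → ℝᵐ with ‖u(t)‖ ≤ 1 for all t, such that φ′(t) = f̂(φ(t)) + Ĝ(φ(t))·u(t) for every t ∈ [0, T]. -/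
open Matrix Set

lemma quad_eq {n m : ℕ} (A : Matrix (Fin n) (Fin m) ℝ) (u : EuclideanSpace ℝ (Fin m)) :
    (inner ℝ u (appMat (Aᴴ * A) u) : ℝ) = ‖appMat A u‖^2 := by
  rw [← real_inner_self_eq_norm_sq]
  simp only [PiLp.inner_apply, RCLike.inner_apply', conj_trivial]
  show ∑ i, u i * ((Aᴴ * A).mulVec u) i = ∑ i, (A.mulVec u i) * (A.mulVec u i)
  have h1 : ∀ w : Fin m → ℝ, ∑ i, (u : Fin m → ℝ) i * w i = u ⬝ᵥ w := fun _ => rfl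
  have h2 : ∑ i, (A.mulVec u i) * (A.mulVec u i) = (A *ᵥ u) ⬝ᵥ (A *ᵥ u) := rfl
  rw [h1, h2, ← Matrix.mulVec_mulVec, Matrix.dotProduct_mulVec,
    Matrix.conjTranspose_eq_transpose_of_trivial, Matrix.vecMul_transpose]

lemma minSV_key {n m : ℕ} (G₀ : Matrix (Fin n) (Fin m) ℝ) (hG₀ : G₀ ≠ 0) :
    0 < minSV G₀ ∧ ∀ u ∈ (LinearMap.ker (Matrix.toEuclideanLin G₀))ᗮ,
      minSV G₀ * ‖u‖ ≤ ‖appMat G₀ u‖ := by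
  set L := Matrix.toEuclideanLin G₀ with hL
  have hA := Matrix.isHermitian_conjTranspose_mul_self G₀
  set e := hA.eigenvectorBasis with he
  set μ := hA.eigenvalues with hμ
  have hμ0 : ∀ i, 0 ≤ μ i := fun i => Matrix.eigenvalues_conjTranspose_mul_self_nonneg G₀ i
  -- appMat of B on eigenvector
  have happ : ∀ i, appMat (G₀ᴴ * G₀) (e i) = μ i • e i := by
    intro i
    have := hA.mulVec_eigenvectorBasis i
    ext j
    exact congrFun this j
  -- eigenvectors with zero eigenvalue are in ker L
  have hker : ∀ i, μ i = 0 → e i ∈ LinearMap.ker L := by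
    intro i hi
    have h1 : ‖appMat G₀ (e i)‖^2 = 0 := by
      rw [← quad_eq, happ i, hi, zero_smul, inner_zero_right]
    have h2 : appMat G₀ (e i) = 0 := by
      have h3 : ‖appMat G₀ (e i)‖ = 0 := by
        have := pow_eq_zero_iff (n := 2) (two_ne_zero) |>.mp h1
        exact this
      exact norm_eq_zero.mp h3
    exact LinearMap.mem_ker.mpr h2
  -- symmetry of B
  have hsym : ∀ x y : EuclideanSpace ℝ (Fin m),
      (inner ℝ (appMat (G₀ᴴ * G₀) x) y : ℝ) = inner ℝ x (appMat (G₀ᴴ * G₀) y) := by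
    intro x y
    simp only [PiLp.inner_apply, RCLike.inner_apply', conj_trivial]
    show ∑ i, ((G₀ᴴ * G₀).mulVec x) i * y i = ∑ i, x i * ((G₀ᴴ * G₀).mulVec y) i
    have h1 : ∑ i, ((G₀ᴴ * G₀).mulVec x) i * y i = ((G₀ᴴ * G₀) *ᵥ x) ⬝ᵥ y := rfl
    have h2 : ∑ i, (x : Fin m → ℝ) i * ((G₀ᴴ * G₀).mulVec y) i = x ⬝ᵥ ((G₀ᴴ * G₀) *ᵥ y) := rfl
    rw [h1, h2, Matrix.dotProduct_mulVec x, ← Matrix.mulVec_transpose]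
    congr 1
    rw [← hA]
    simp [Matrix.conjTranspose_eq_transpose_of_trivial]
  -- repr of appMat B u
  have hrepr : ∀ (u : EuclideanSpace ℝ (Fin m)) i,
      e.repr (appMat (G₀ᴴ * G₀) u) i = μ i * e.repr u i := by
    intro u i
    rw [e.repr_apply_apply, e.repr_apply_apply, ← hsym, happ i,
      real_inner_smul_left]
  -- quadratic form as weighted sum
  have hquadsum : ∀ u : EuclideanSpace ℝ (Fin m),
      ‖appMat G₀ u‖^2 = ∑ i, μ i * (e.repr u i)^2 := by
    intro u
    rw [← quad_eq, ← e.repr.inner_map_map u (appMat (G₀ᴴ * G₀) u)]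
    simp only [PiLp.inner_apply, RCLike.inner_apply, conj_trivial]
    refine Finset.sum_congr rfl fun i _ => ?_
    rw [hrepr]; ring
  have hnormsum : ∀ u : EuclideanSpace ℝ (Fin m),
      ‖u‖^2 = ∑ i, (e.repr u i)^2 := by
    intro u
    rw [← real_inner_self_eq_norm_sq, ← e.repr.inner_map_map u u]
    simp only [PiLp.inner_apply, RCLike.inner_apply, conj_trivial]
    exact Finset.sum_congr rfl fun i _ => (sq _).symm
  -- the set S
  set S := {μ' : ℝ | μ' ≠ 0 ∧ ∃ i, hA.eigenvalues i = μ'} with hS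
  have hSfin : S.Finite := (Set.finite_range hA.eigenvalues).subset (by
    rintro x ⟨-, i, hi⟩; exact ⟨i, hi⟩)
  have hSne : S.Nonempty := by
    by_contra hemp
    rw [Set.not_nonempty_iff_eq_empty] at hemp
    have hall : ∀ i, μ i = 0 := by
      intro i
      by_contra hne
      exact Set.eq_empty_iff_forall_notMem.mp hemp (μ i) ⟨hne, i, rfl⟩
    apply hG₀
    have hLzero : ∀ u : EuclideanSpace ℝ (Fin m), appMat G₀ u = 0 := by
      intro u
      have : ‖appMat G₀ u‖^2 = 0 := by
        rw [hquadsum]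
        exact Finset.sum_eq_zero fun i _ => by rw [hall i, zero_mul]
      exact norm_eq_zero.mp (pow_eq_zero_iff two_ne_zero |>.mp this)
    have : Matrix.toEuclideanLin G₀ = Matrix.toEuclideanLin (0 : Matrix (Fin n) (Fin m) ℝ) := by
      apply LinearMap.ext
      intro u
      rw [map_zero]
      exact hLzero u
    exact Matrix.toEuclideanLin.injective this
  have hSpos : ∀ x ∈ S, 0 ≤ x := by rintro x ⟨hx, i, rfl⟩; exact hμ0 i
  have hbdd : BddBelow S := hSfin.bddBelow
  have hsInf_mem : sInf S ∈ S := hSne.csInf_mem hSfin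
  have hsInf_pos : 0 < sInf S := lt_of_le_of_ne (hSpos _ hsInf_mem) (Ne.symm hsInf_mem.1)
  have hminSV : minSV G₀ = Real.sqrt (sInf S) := rfl
  have hσpos : 0 < minSV G₀ := by rw [hminSV]; exact Real.sqrt_pos.mpr hsInf_pos
  refine ⟨hσpos, fun u hu => ?_⟩
  -- coefficients at zero eigenvalues vanish
  have hc0 : ∀ i, μ i = 0 → e.repr u i = 0 := by
    intro i hi
    rw [e.repr_apply_apply]
    rw [real_inner_comm]
    exact (Submodule.mem_orthogonal' _ u |>.mp hu) (e i) (hker i hi)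
  have hmain : (minSV G₀)^2 * ‖u‖^2 ≤ ‖appMat G₀ u‖^2 := by
    rw [hquadsum, hnormsum, Finset.mul_sum]
    refine Finset.sum_le_sum fun i _ => ?_
    by_cases hci : e.repr u i = 0
    · simp [hci]
    · have hμi : μ i ≠ 0 := fun h => hci (hc0 i h)
      have : sInf S ≤ μ i := csInf_le hbdd ⟨hμi, i, rfl⟩
      have hsq : (minSV G₀)^2 = sInf S := by
        rw [hminSV, Real.sq_sqrt hsInf_pos.le]
      rw [hsq]
      exact mul_le_mul_of_nonneg_right this (sq_nonneg _)
  have h1 : (minSV G₀ * ‖u‖)^2 ≤ ‖appMat G₀ u‖^2 := by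
    rw [mul_pow]; exact hmain
  have := Real.sqrt_le_sqrt h1
  rwa [Real.sqrt_sq (by positivity), Real.sqrt_sq (norm_nonneg _)] at this

set_option maxHeartbeats 1000000 in
lemma pinv_exists {n m : ℕ} (G₀ : Matrix (Fin n) (Fin m) ℝ) (hG₀ : G₀ ≠ 0) :
    ∃ P : EuclideanSpace ℝ (Fin n) →ₗ[ℝ] EuclideanSpace ℝ (Fin m),
      ∀ y ∈ colSpace G₀, appMat G₀ (P y) = y ∧ minSV G₀ * ‖P y‖ ≤ ‖y‖ := by
  obtain ⟨hσ, hkey⟩ := minSV_key G₀ hG₀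
  set L := Matrix.toEuclideanLin G₀ with hL
  set K := (LinearMap.ker L)ᗮ with hK
  set S := colSpace G₀ with hS
  have hmemS : ∀ x : K, L x ∈ S := fun x => ⟨x, rfl⟩
  set LS : K →ₗ[ℝ] S := (L.comp K.subtype).codRestrict S (fun x => hmemS x) with hLS
  have hinj : Function.Injective LS := by
    intro x y hxy
    have h1 : L x = L y := congrArg Subtype.val hxy
    have hmem : ((x : EuclideanSpace ℝ (Fin m)) - y) ∈ K := Submodule.sub_mem K x.2 y.2
    have h3 := hkey _ hmem
    have h4 : appMat G₀ ((x : EuclideanSpace ℝ (Fin m)) - y) = 0 := by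
      show L _ = 0
      rw [map_sub, h1, sub_self]
    rw [h4, norm_zero] at h3
    have h5 : ‖(x : EuclideanSpace ℝ (Fin m)) - y‖ = 0 := by
      nlinarith [norm_nonneg ((x : EuclideanSpace ℝ (Fin m)) - y)]
    exact Subtype.ext (sub_eq_zero.mp (norm_eq_zero.mp h5))
  have hsurj : Function.Surjective LS := by
    rintro ⟨y, u, rfl⟩
    obtain ⟨a, ha, b, hb, hab⟩ := Submodule.exists_add_mem_mem_orthogonal (K := LinearMap.ker L) u
    refine ⟨⟨b, hb⟩, ?_⟩
    apply Subtype.ext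
    show L b = L u
    rw [hab, map_add, LinearMap.mem_ker.mp ha, zero_add]
  set E := LinearEquiv.ofBijective LS ⟨hinj, hsurj⟩ with hE
  set P : EuclideanSpace ℝ (Fin n) →ₗ[ℝ] EuclideanSpace ℝ (Fin m) :=
    K.subtype ∘ₗ (E.symm.toLinearMap ∘ₗ (S.orthogonalProjectionOnto).toLinearMap) with hP
  refine ⟨P, fun y hy => ?_⟩
  have hproj : S.orthogonalProjectionOnto y = ⟨y, hy⟩ :=
    Subtype.ext (S.starProjection_eq_self_iff.mpr hy)
  have hPy : P y = ((E.symm ⟨y, hy⟩ : K) : EuclideanSpace ℝ (Fin m)) := by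
    simp [hP, hproj]
  have hLPy : appMat G₀ (P y) = y := by
    rw [hPy]
    show L _ = y
    have := E.apply_symm_apply ⟨y, hy⟩
    have h2 := congrArg Subtype.val this
    exact h2
  refine ⟨hLPy, ?_⟩
  have := hkey (P y) (by rw [hPy]; exact (E.symm ⟨y, hy⟩).2)
  rwa [hLPy] at this

section Helpers

lemma appMat_mul {n m : ℕ} (A : Matrix (Fin n) (Fin m) ℝ) (B : Matrix (Fin m) (Fin m) ℝ)
    (v : EuclideanSpace ℝ (Fin m)) : appMat (A * B) v = appMat A (appMat B v) := by
  show Matrix.toEuclideanLin _ _ = _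
  simp [Matrix.toEuclideanLin_apply, appMat, Matrix.mulVec_mulVec]

lemma appMat_one {m : ℕ} (v : EuclideanSpace ℝ (Fin m)) :
    appMat (1 : Matrix (Fin m) (Fin m) ℝ) v = v := by
  ext i
  show Matrix.mulVec 1 v i = v i
  rw [Matrix.one_mulVec]

lemma appMat_add {n m : ℕ} (A B : Matrix (Fin n) (Fin m) ℝ) (v : EuclideanSpace ℝ (Fin m)) :
    appMat (A + B) v = appMat A v + appMat B v := by
  show Matrix.toEuclideanLin (A + B) v = _
  rw [map_add]
  rfl

lemma appMat_sub {n m : ℕ} (A B : Matrix (Fin n) (Fin m) ℝ) (v : EuclideanSpace ℝ (Fin m)) :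
    appMat (A - B) v = appMat A v - appMat B v := by
  show Matrix.toEuclideanLin (A - B) v = _
  rw [map_sub]
  rfl

lemma appMat_le_opNorm {n m : ℕ} (A : Matrix (Fin n) (Fin m) ℝ) (v : EuclideanSpace ℝ (Fin m)) :
    ‖appMat A v‖ ≤ matOpNorm A * ‖v‖ := by
  have := (LinearMap.toContinuousLinearMap (Matrix.toEuclideanLin A)).le_opNorm v
  simpa [matOpNorm, appMat] using this

lemma appMat_mem_colSpace {n m : ℕ} (R : Matrix (Fin n) (Fin m) ℝ)
    (B : Matrix (Fin m) (Fin m) ℝ) (v : EuclideanSpace ℝ (Fin m)) :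
    appMat (R * B) v ∈ colSpace R := by
  rw [appMat_mul]
  exact LinearMap.mem_range.mpr ⟨appMat B v, rfl⟩

lemma colSpace_mul_unit {n m : ℕ} (R : Matrix (Fin n) (Fin m) ℝ)
    (H₀ : Matrix (Fin m) (Fin m) ℝ) (hH₀ : IsUnit H₀) :
    colSpace (R * H₀) = colSpace R := by
  apply le_antisymm
  · rintro y ⟨u, rfl⟩
    exact appMat_mem_colSpace R H₀ u
  · rintro y ⟨u, rfl⟩
    obtain ⟨U, hU⟩ := hH₀
    refine ⟨appMat (↑U⁻¹) u, ?_⟩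
    show appMat (R * H₀) (appMat (↑U⁻¹) u) = appMat R u
    rw [← appMat_mul, Matrix.mul_assoc, ← hU, Units.mul_inv, Matrix.mul_one]

end Helpers

set_option maxHeartbeats 2000000 in
/-- **Theorem 3.** Every trajectory of the ball system
`ẋ = f₀ + g(‖x‖)v`, `v ∈ 𝔹 ∩ Im G₀`, with `g(s) = σ − (L_f + L_G)s`, is a trajectory
of every system consistent with the prior knowledge, realized by admissible
controls. -/
theorem theorem3_ball_system {n m : ℕ} (R : Matrix (Fin n) (Fin m) ℝ)
    (Lf LG : ℝ) (hLf : 0 < Lf) (hLG : 0 < LG)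
    (f₀ : EuclideanSpace ℝ (Fin n)) (hf₀ : f₀ ∈ colSpace R)
    (H₀ : Matrix (Fin m) (Fin m) ℝ) (hH₀ : IsUnit H₀)
    (G₀ : Matrix (Fin n) (Fin m) ℝ) (hG₀fac : G₀ = R * H₀) (hG₀ : G₀ ≠ 0)
    (g : ℝ → ℝ) (hg : ∀ s, g s = minSV G₀ - (Lf + LG) * s)
    (T : ℝ) (hT : 0 ≤ T)
    (φ φ' : ℝ → EuclideanSpace ℝ (Fin n)) (hφ0 : φ 0 = 0)
    (hstay : ∀ t ∈ Set.Icc (0 : ℝ) T, (Lf + LG) * ‖φ t‖ ≤ minSV G₀)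
    (hderiv : ∀ t ∈ Set.Icc (0 : ℝ) T, HasDerivAt φ (φ' t) t)
    (v : ℝ → EuclideanSpace ℝ (Fin n))
    (hv : ∀ t ∈ Set.Icc (0 : ℝ) T, ‖v t‖ ≤ 1 ∧ v t ∈ colSpace G₀)
    (hform : ∀ t ∈ Set.Icc (0 : ℝ) T, φ' t = f₀ + g ‖φ t‖ • v t) :
    ∀ fh Gh, Consistent R Lf LG f₀ G₀ fh Gh →
      ∃ u : ℝ → EuclideanSpace ℝ (Fin m),
        ∀ t ∈ Set.Icc (0 : ℝ) T,
          ‖u t‖ ≤ 1 ∧ φ' t = fh (φ t) + appMat (Gh (φ t)) (u t) := by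
  intro fh Gh cons
  obtain ⟨hσpos, hkey⟩ := minSV_key G₀ hG₀
  obtain ⟨P, hP⟩ := pinv_exists G₀ hG₀
  obtain ⟨Hh, hHh0, hHhfac⟩ := cons.factor
  have hSR : colSpace G₀ = colSpace R := by
    rw [hG₀fac]; exact colSpace_mul_unit R H₀ hH₀
  have key : ∀ t, ∃ ut : EuclideanSpace ℝ (Fin m), t ∈ Set.Icc (0:ℝ) T →
      ‖ut‖ ≤ 1 ∧ φ' t = fh (φ t) + appMat (Gh (φ t)) ut := by
    intro t
    by_cases ht : t ∈ Set.Icc (0:ℝ) T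
    swap
    · exact ⟨0, fun h => absurd h ht⟩
    set σ := minSV G₀ with hσdef
    set x := φ t with hx
    set w := f₀ - fh x + g ‖x‖ • v t with hw
    set Δ := Gh x - G₀ with hΔdef
    have hgx : g ‖x‖ = σ - (Lf + LG) * ‖x‖ := hg _
    have hstayt := hstay t ht
    have hgnn : 0 ≤ g ‖x‖ := by rw [hgx]; linarith
    have hfbound : ‖f₀ - fh x‖ ≤ Lf * ‖x‖ := by
      have h := cons.lipf 0 x
      rwa [cons.f_zero, zero_sub, norm_neg] at h
    have hv1 := (hv t ht).1
    have hwnorm : ‖w‖ ≤ σ - LG * ‖x‖ := by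
      have h1 : ‖w‖ ≤ ‖f₀ - fh x‖ + ‖g ‖x‖ • v t‖ := norm_add_le _ _
      have h2 : ‖g ‖x‖ • v t‖ = g ‖x‖ * ‖v t‖ := by
        rw [norm_smul, Real.norm_of_nonneg hgnn]
      have h3 : g ‖x‖ * ‖v t‖ ≤ g ‖x‖ := mul_le_of_le_one_right hgnn hv1
      rw [h2] at h1
      rw [hgx] at h3
      nlinarith
    have hΔop : matOpNorm Δ ≤ LG * ‖x‖ := by
      have h := cons.lipG x 0
      rwa [cons.G_zero, sub_zero] at h
    have hΔnorm : ∀ z, ‖appMat Δ z‖ ≤ LG * ‖x‖ * ‖z‖ := fun z =>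
      (appMat_le_opNorm Δ z).trans (mul_le_mul_of_nonneg_right hΔop (norm_nonneg z))
    have hΔmem : ∀ z, appMat Δ z ∈ colSpace G₀ := by
      intro z
      have hfac : Δ = R * (Hh x - H₀) := by
        rw [hΔdef, hHhfac x, hG₀fac, Matrix.mul_sub]
      rw [hfac, hSR]
      exact appMat_mem_colSpace R _ z
    have hwmem : w ∈ colSpace G₀ := by
      rw [hSR]
      exact Submodule.add_mem _ (Submodule.sub_mem _ hf₀ (cons.f_im x))
        (Submodule.smul_mem _ _ (hSR ▸ (hv t ht).2))
    have hLGx : LG * ‖x‖ < σ := by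
      rcases eq_or_lt_of_le (norm_nonneg x) with h | h
      · rw [← h]; simpa using hσpos
      · nlinarith
    set F : EuclideanSpace ℝ (Fin m) → EuclideanSpace ℝ (Fin m) :=
      fun u => P (w - appMat Δ u) with hF
    have happsub : ∀ a b : EuclideanSpace ℝ (Fin m),
        appMat Δ (a - b) = appMat Δ a - appMat Δ b := fun a b =>
      map_sub (Matrix.toEuclideanLin Δ) a b
    have hFdiff : ∀ a b, F a - F b = P (appMat Δ (b - a)) := by
      intro a b
      rw [hF]
      simp only
      rw [← map_sub, happsub]
      congr 1
      abel
    set q : NNReal := Real.toNNReal (LG * ‖x‖ / σ) with hq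
    have hqc : (q : ℝ) = LG * ‖x‖ / σ :=
      Real.coe_toNNReal _ (by positivity)
    have hqlt : q < 1 := by
      rw [← NNReal.coe_lt_coe, hqc, NNReal.coe_one]
      rw [div_lt_one hσpos]
      exact hLGx
    have hlip : LipschitzWith q F := by
      apply LipschitzWith.of_dist_le_mul
      intro a b
      rw [dist_eq_norm, dist_eq_norm, hFdiff, hqc]
      have h1 := (hP _ (hΔmem (b - a))).2
      have h2 := hΔnorm (b - a)
      have h3 : ‖b - a‖ = ‖a - b‖ := norm_sub_rev _ _
      rw [div_mul_eq_mul_div, le_div_iff₀ hσpos]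
      nlinarith [norm_nonneg (P (appMat Δ (b - a)))]
    have hcontr : ContractingWith q F := ⟨hqlt, hlip⟩
    set u₀ := ContractingWith.fixedPoint F hcontr with hu₀
    have hfix : F u₀ = u₀ := hcontr.fixedPoint_isFixedPt
    have hzmem : w - appMat Δ u₀ ∈ colSpace G₀ :=
      Submodule.sub_mem _ hwmem (hΔmem u₀)
    have hG₀u : appMat G₀ u₀ = w - appMat Δ u₀ := by
      conv_lhs => rw [← hfix]
      exact (hP _ hzmem).1
    have hGh : appMat (Gh x) u₀ = w := by
      have hgx2 : Gh x = G₀ + Δ := by rw [hΔdef]; abel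
      rw [hgx2, appMat_add, hG₀u]
      abel
    have hnorm1 : ‖u₀‖ ≤ 1 := by
      have h1 : σ * ‖u₀‖ ≤ ‖w - appMat Δ u₀‖ := by
        conv_lhs => rw [← hfix]
        exact (hP _ hzmem).2
      have h2 : ‖w - appMat Δ u₀‖ ≤ ‖w‖ + ‖appMat Δ u₀‖ := norm_sub_le _ _
      have h3 := hΔnorm u₀
      nlinarith [norm_nonneg u₀]
    refine ⟨u₀, fun _ => ⟨hnorm1, ?_⟩⟩
    rw [hGh, hform t ht, hw]
    abel
  choose u hu using key
  exact ⟨u, fun t ht => hu t ht⟩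
end

section
/- Let R ∈ ℝ^{n×m}, L_G > 0, x ∈ ℝⁿ with x ≠ 0, let H₀ ∈ ℝ^{m×m} be invertible, set G₀ = R·H₀, and let B ∈ ℝ^{n×m} satisfy ‖B − G₀‖ ≤ L_G·‖x‖ (operator norm) and B = R·P for some P ∈ ℝ^{m×m}. Then there exist Ĝ : ℝⁿ → ℝ^{n×m} and Ĥ : ℝⁿ → ℝ^{m×m} such that Ĝ is L_G-Lipschitz with respect to the operator norm, Ĝ(0) = G₀, Ĝ(x) = B, Ĥ(0) = H₀ is invertible, and Ĝ(y) = R·Ĥ(y) for all y ∈ ℝⁿ. -/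
open Matrix Set

lemma matOpNorm_smul {n m : ℕ} (c : ℝ) (M : Matrix (Fin n) (Fin m) ℝ) :
    matOpNorm (c • M) = |c| * matOpNorm M := by
  unfold matOpNorm
  rw [_root_.map_smul, _root_.map_smul]
  rw [norm_smul c (LinearMap.toContinuousLinearMap (Matrix.toEuclideanLin M)), Real.norm_eq_abs]

/-- Given `G₀ = R H₀` with `H₀` invertible and a matrix `B = R P`
with `‖B − G₀‖ ≤ L_G‖x‖` (operator norm), `x ≠ 0`, there are `Ĝ`, `Ĥ` with `Ĝ`
`L_G`-Lipschitz in the operator norm, `Ĝ 0 = G₀`, `Ĝ x = B`, `Ĥ 0 = H₀` (which is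
invertible), and `Ĝ y = R Ĥ y` for all `y`. -/
theorem exists_lipschitz_matrix_interpolant {n m : ℕ}
    (R : Matrix (Fin n) (Fin m) ℝ) (LG : ℝ) (hLG : 0 < LG)
    (x : EuclideanSpace ℝ (Fin n)) (hx : x ≠ 0)
    (H₀ : Matrix (Fin m) (Fin m) ℝ) (hH₀ : IsUnit H₀)
    (G₀ : Matrix (Fin n) (Fin m) ℝ) (hG₀ : G₀ = R * H₀)
    (B : Matrix (Fin n) (Fin m) ℝ) (hBclose : matOpNorm (B - G₀) ≤ LG * ‖x‖)
    (P : Matrix (Fin m) (Fin m) ℝ) (hBfac : B = R * P) :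
    ∃ (Gh : EuclideanSpace ℝ (Fin n) → Matrix (Fin n) (Fin m) ℝ)
      (Hh : EuclideanSpace ℝ (Fin n) → Matrix (Fin m) (Fin m) ℝ),
      (∀ y z, matOpNorm (Gh y - Gh z) ≤ LG * ‖y - z‖) ∧
      Gh 0 = G₀ ∧ Gh x = B ∧ Hh 0 = H₀ ∧ IsUnit (Hh 0) ∧
      ∀ y, Gh y = R * Hh y := by
  have hxn : (0:ℝ) < ‖x‖ := norm_pos_iff.mpr hx
  set φ : EuclideanSpace ℝ (Fin n) → ℝ :=
    fun y => (inner ℝ y x : ℝ) / (‖x‖ ^ 2) with hφ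
  refine ⟨fun y => G₀ + φ y • (B - G₀), fun y => H₀ + φ y • (P - H₀), ?_, ?_, ?_, ?_, ?_, ?_⟩
  · intro y z
    have hdiff : (G₀ + φ y • (B - G₀)) - (G₀ + φ z • (B - G₀))
        = (φ y - φ z) • (B - G₀) := by
      rw [sub_smul]; abel
    rw [hdiff, matOpNorm_smul]
    have h1 : |φ y - φ z| ≤ ‖y - z‖ / ‖x‖ := by
      have : φ y - φ z = (inner ℝ (y - z) x : ℝ) / (‖x‖ ^ 2) := by
        rw [hφ]; simp [inner_sub_left, sub_div]
      rw [this, abs_div, abs_of_nonneg (by positivity : (0:ℝ) ≤ ‖x‖ ^ 2)]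
      rw [div_le_div_iff₀ (by positivity) hxn]
      calc |(inner ℝ (y - z) x : ℝ)| * ‖x‖ ≤ (‖y - z‖ * ‖x‖) * ‖x‖ :=
            mul_le_mul_of_nonneg_right (abs_real_inner_le_norm _ _) (le_of_lt hxn)
        _ = ‖y - z‖ * ‖x‖ ^ 2 := by ring
    have h0 : 0 ≤ matOpNorm (B - G₀) := norm_nonneg _
    calc |φ y - φ z| * matOpNorm (B - G₀)
        ≤ (‖y - z‖ / ‖x‖) * (LG * ‖x‖) := by
          apply mul_le_mul h1 hBclose h0 (by positivity)
      _ = LG * ‖y - z‖ := by field_simp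
  · have : φ 0 = 0 := by simp [hφ]
    simp [this]
  · have : φ x = 1 := by
      show (inner ℝ x x : ℝ) / ‖x‖ ^ 2 = 1
      rw [real_inner_self_eq_norm_sq]
      field_simp
    simp [this]
  · have : φ 0 = 0 := by simp [hφ]
    simp [this]
  · have : φ 0 = 0 := by simp [hφ]
    simp [this, hH₀]
  · intro y
    rw [hG₀, hBfac, Matrix.mul_add, Matrix.mul_smul, Matrix.mul_sub]
end
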